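/- Assume 0<β_I<∞, β̂ := sup_{y∈ℝ²} β(y) > 0, k := ∫_{ℝ²} β(y) f(y) dy > 0, and set ρ(T)=k/β̂. Then for every ε with 0<ε<1−e^{−ρ(T)}, the transmission capacity of the Poisson clustered process is upper bounded by that of the Poisson point process: C(ε,T) ≤ C_p(ε,T) = ((1−ε)/β_I)·ln(1/(1−ε)). -/

import Mathlib

open MeasureTheory ProbabilityTheory Filter Real
open scoped ProbabilityTheory ENNReal

local notation "E2" => EuclideanSpace ℝ (Fin 2)

set_option maxHeartbeats 1000000

private lemma meas_aux_stmt9 {φ : E2 → ℝ} (hφ : ContinuousOn φ {(0 : E2)}ᶜ) :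
    Measurable φ := by
  apply measurable_of_isOpen
  intro s hs
  have h1 : IsOpen ({(0 : E2)}ᶜ ∩ φ ⁻¹' s) :=
    hφ.isOpen_inter_preimage isOpen_compl_singleton hs
  have h2 : φ ⁻¹' s = ({(0 : E2)}ᶜ ∩ φ ⁻¹' s) ∪ ({(0 : E2)} ∩ φ ⁻¹' s) := by
    ext x; by_cases hx : x = (0 : E2) <;> simp [hx]
  rw [h2]
  exact h1.measurableSet.union
    ((Set.subsingleton_singleton.anti Set.inter_subset_left).measurableSet)

/-- For outage constraints `ε < 1 - e^{-ρ(T)}` with `ρ(T) = k/β̂`, the transmission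
capacity of the Poisson clustered network is upper bounded by that of the Poisson
network: `C(ε,T) ≤ C_p(ε,T) = ((1-ε)/β_I)·ln(1/(1-ε))`. -/
theorem stmt_9
    (g f : E2 → ℝ) (T R ε : ℝ)
    (hT : 0 < T) (hR : 0 < R)
    (hg_pos : ∀ x : E2, x ≠ 0 → 0 < g x)
    (hg_cont : ContinuousOn g {(0 : E2)}ᶜ)
    (hg_mono : ∀ x y : E2, x ≠ 0 → y ≠ 0 → ‖x‖ ≤ ‖y‖ → g y ≤ g x)
    (hg_int : ∀ δ : ℝ, 0 < δ → IntegrableOn g (Metric.ball (0 : E2) δ)ᶜ)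
    (hf_meas : Measurable f) (hf_nonneg : ∀ x, 0 ≤ f x)
    (hf_prob : ∫ x, f x = 1)
    (hf_iso : ∀ x y : E2, ‖x‖ = ‖y‖ → f x = f y)
    (z : E2) (hz : z = EuclideanSpace.single (0 : Fin 2) R)
    (β : E2 → ℝ)
    (hβ : ∀ y, β y = ∫ x, g (x - y - z) / (g z / T + g (x - y - z)) * f x)
    (βI : ℝ) (hβI : βI = ∫ u, g u / (g z / T + g u))
    (hβI_fin : Integrable fun u : E2 => g u / (g z / T + g u))
    (hβI_pos : 0 < βI)
    (βhat : ℝ) (hβhat : βhat = ⨆ y : E2, β y) (hβhat_pos : 0 < βhat)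
    (k : ℝ) (hk : k = ∫ y, β y * f y) (hk_pos : 0 < k)
    (hε : 0 < ε) (hε_small : ε < 1 - Real.exp (-(k / βhat)))
    (P1 : ℝ → ℝ → ℝ) (P2 : ℝ → ℝ)
    (hP1 : ∀ cbar lamp, P1 cbar lamp =
      Real.exp (-(lamp * ∫ y, (1 - Real.exp (-(cbar * β y))))))
    (hP2 : ∀ cbar, P2 cbar = ∫ y, Real.exp (-(cbar * β y)) * f y)
    (C : ℝ≥0∞)
    (hC : C = ENNReal.ofReal (1 - ε) *
      ⨆ (p : ℝ × ℝ) (_ : 0 < p.1 ∧ 0 < p.2 ∧ 1 - ε ≤ P1 p.2 p.1 * P2 p.2),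
        ENNReal.ofReal (p.1 * p.2)) :
    C ≤ ENNReal.ofReal ((1 - ε) / βI * Real.log (1 / (1 - ε))) := by
  have hε1 : (0 : ℝ) < 1 - ε := by
    have := Real.exp_pos (-(k / βhat)); linarith
  -- z is nonzero
  have hz0 : z ≠ 0 := by
    rw [hz]
    intro hcon
    have h0 := congrArg (fun v : E2 => v 0) hcon
    simp [EuclideanSpace.single_apply] at h0
    exact absurd h0 (ne_of_gt hR)
  have hgz : 0 < g z := hg_pos z hz0
  have hgzT : 0 < g z / T := div_pos hgz hT
  set h : E2 → ℝ := fun u => g u / (g z / T + g u) with hh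
  have hg_meas : Measurable g := meas_aux_stmt9 hg_cont
  have hh_meas : Measurable h := hg_meas.div (measurable_const.add hg_meas)
  have hh0 : ∀ u : E2, u ≠ 0 → 0 ≤ h u := by
    intro u hu
    have hgu := hg_pos u hu
    have : (0:ℝ) < g z / T + g u := by linarith
    exact div_nonneg hgu.le this.le
  have hh1 : ∀ u : E2, u ≠ 0 → h u ≤ 1 := by
    intro u hu
    have hgu := hg_pos u hu
    have hden : (0:ℝ) < g z / T + g u := by linarith
    rw [hh]
    exact (div_le_one hden).mpr (by linarith)
  have hβI' : βI = ∫ u, h u := hβI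
  have hβI_fin' : Integrable h := hβI_fin
  have hf_int : Integrable f := by
    by_contra hcon
    rw [integral_undef hcon] at hf_prob; norm_num at hf_prob
  have hβf_int : Integrable fun y => β y * f y := by
    by_contra hcon
    rw [integral_undef hcon] at hk
    exact absurd hk (by linarith)
  -- rewritten β
  have hβ' : ∀ y, β y = ∫ x, h (x - z - y) * f x := by
    intro y
    rw [hβ y]
    congr 1
    funext x
    rw [hh]
    simp only [sub_right_comm x y z]
  -- almost everywhere a point is avoided
  have hae_ne : ∀ a : E2, ∀ᵐ (x : E2), x ≠ a := by
    intro a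
    have hsing : (volume : Measure E2) {a} = 0 := measure_singleton a
    rw [ae_iff]
    simpa only [not_not, Set.setOf_eq_eq_singleton] using hsing
  -- pointwise a.e. bounds for the integrand of β
  have hψ_ae : ∀ y : E2, ∀ᵐ x : E2,
      0 ≤ h (x - z - y) * f x ∧ h (x - z - y) * f x ≤ f x := by
    intro y
    filter_upwards [hae_ne (z + y)] with x hx
    have hne : x - z - y ≠ 0 := by
      rw [sub_sub]; exact sub_ne_zero.mpr hx
    refine ⟨mul_nonneg (hh0 _ hne) (hf_nonneg x), ?_⟩
    calc h (x - z - y) * f x ≤ 1 * f x :=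
          mul_le_mul_of_nonneg_right (hh1 _ hne) (hf_nonneg x)
      _ = f x := one_mul _
  have hψ_meas : ∀ y : E2, Measurable fun x : E2 => h (x - z - y) * f x := by
    intro y
    exact (hh_meas.comp ((measurable_id.sub measurable_const).sub measurable_const)).mul hf_meas
  have hψ_int : ∀ y : E2, Integrable fun x : E2 => h (x - z - y) * f x := by
    intro y
    refine hf_int.mono (hψ_meas y).aestronglyMeasurable ?_
    filter_upwards [hψ_ae y] with x hx
    rw [Real.norm_of_nonneg hx.1, Real.norm_of_nonneg (hf_nonneg x)]
    exact hx.2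
  have hβ_nonneg : ∀ y, 0 ≤ β y := by
    intro y; rw [hβ' y]
    exact integral_nonneg_of_ae ((hψ_ae y).mono fun x hx => hx.1)
  have hβ_le_one : ∀ y, β y ≤ 1 := by
    intro y; rw [hβ' y, ← hf_prob]
    exact integral_mono_ae (hψ_int y) hf_int ((hψ_ae y).mono fun x hx => hx.2)
  have hbdd : BddAbove (Set.range β) := ⟨1, by rintro _ ⟨y, rfl⟩; exact hβ_le_one y⟩
  have hβ_le_hat : ∀ y, β y ≤ βhat := fun y => hβhat ▸ le_ciSup hbdd y
  -- product function
  have hF_meas : Measurable fun p : E2 × E2 => h (p.1 - z - p.2) * f p.1 :=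
    (hh_meas.comp ((measurable_fst.sub measurable_const).sub measurable_snd)).mul
      (hf_meas.comp measurable_fst)
  have hβ_meas : Measurable β := by
    have hm := (hF_meas.stronglyMeasurable).integral_prod_left'
      (μ := (volume : Measure E2))
    have hβeq : β = fun y => ∫ x,
        (fun p : E2 × E2 => h (p.1 - z - p.2) * f p.1) (x, y) := by
      funext y; rw [hβ' y]
    rw [hβeq]
    exact hm.measurable
  have hF_int : Integrable (fun p : E2 × E2 => h (p.1 - z - p.2) * f p.1)
      ((volume : Measure E2).prod volume) := by
    rw [integrable_prod_iff hF_meas.aestronglyMeasurable]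
    constructor
    · refine Eventually.of_forall fun x => ?_
      exact (hβI_fin'.comp_sub_left (x - z)).mul_const (f x)
    · have key : (fun x : E2 => ∫ y, ‖h (x - z - y) * f x‖) =
          fun x : E2 => (∫ u, ‖h u‖) * ‖f x‖ := by
        funext x
        have : (fun y : E2 => ‖h (x - z - y) * f x‖) =
            fun y : E2 => ‖h (x - z - y)‖ * ‖f x‖ := by
          funext y; rw [norm_mul]
        rw [this, integral_mul_const]
        congr 1
        exact integral_sub_left_eq_self (fun u => ‖h u‖) volume (x - z)
      have hInt2 : Integrable (fun x : E2 => (∫ u, ‖h u‖) * ‖f x‖) :=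
        hf_int.norm.const_mul _
      exact hInt2.congr (Eventually.of_forall fun x => (congrFun key x).symm)
  have hβ_int : Integrable β := by
    have hm := hF_int.integral_prod_right
    have hβeq : β = fun y => ∫ x,
        (fun p : E2 × E2 => h (p.1 - z - p.2) * f p.1) (x, y) := by
      funext y; rw [hβ' y]
    rw [hβeq]; exact hm
  -- ∫ β = βI via Fubini
  have hβ_sum : ∫ y, β y = βI := by
    have hswap := integral_integral_swap
      (f := fun x y : E2 => h (x - z - y) * f x) hF_int
    calc ∫ y, β y = ∫ y, ∫ x, h (x - z - y) * f x := by
          congr 1; funext y; exact hβ' y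
      _ = ∫ x, ∫ y, h (x - z - y) * f x := hswap.symm
      _ = ∫ x, βI * f x := by
          congr 1; funext x
          rw [integral_mul_const, integral_sub_left_eq_self h volume (x - z),
            ← hβI', mul_comm]
      _ = βI := by rw [integral_const_mul, hf_prob, mul_one]
  -- the main pointwise bound on feasible pairs
  have hmain : ∀ lam c : ℝ, 0 < lam → 0 < c → 1 - ε ≤ P1 c lam * P2 c →
      lam * c ≤ Real.log (1 / (1 - ε)) / βI := by
    intro lam c hlam hc hcons
    set s : ℝ := c * βhat with hs
    have hs_pos : 0 < s := mul_pos hc hβhat_pos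
    set I : ℝ := ∫ y, (1 - Real.exp (-(c * β y))) with hI
    have hint_cβ : Integrable fun y => c * β y := hβ_int.const_mul c
    have haux1 : ∀ y, 0 ≤ 1 - Real.exp (-(c * β y)) := by
      intro y
      have h1 : Real.exp (-(c * β y)) ≤ 1 :=
        Real.exp_le_one_iff.mpr (by nlinarith [hβ_nonneg y])
      linarith
    have haux2 : ∀ y, 1 - Real.exp (-(c * β y)) ≤ c * β y := by
      intro y
      have := Real.add_one_le_exp (-(c * β y))
      have h4 : Real.exp (-(c * β y)) * Real.exp (c * β y) = 1 := by
        rw [← Real.exp_add]; simp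
      nlinarith [Real.exp_pos (-(c * β y)), Real.add_one_le_exp (c * β y)]
    have hI_meas : Measurable fun y => 1 - Real.exp (-(c * β y)) :=
      measurable_const.sub ((hβ_meas.const_mul c).neg.exp)
    have hI_int : Integrable fun y => 1 - Real.exp (-(c * β y)) := by
      refine hint_cβ.mono hI_meas.aestronglyMeasurable ?_
      refine Eventually.of_forall fun y => ?_
      rw [Real.norm_of_nonneg (haux1 y),
        Real.norm_of_nonneg (mul_nonneg hc.le (hβ_nonneg y))]
      exact haux2 y
    have hI_nonneg : 0 ≤ I := integral_nonneg haux1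
    -- lower bound on I
    have hIlow : Real.exp (-s) * (c * βI) ≤ I := by
      have hpt : ∀ y, Real.exp (-s) * (c * β y) ≤ 1 - Real.exp (-(c * β y)) := by
        intro y
        have ht0 : 0 ≤ c * β y := mul_nonneg hc.le (hβ_nonneg y)
        have hts : c * β y ≤ s := by
          have := hβ_le_hat y
          rw [hs]; nlinarith
        have h1 : Real.exp (-s) ≤ Real.exp (-(c * β y)) :=
          Real.exp_le_exp.mpr (by linarith)
        have h4 : Real.exp (-(c * β y)) * Real.exp (c * β y) = 1 := by
          rw [← Real.exp_add]; simp
        nlinarith [Real.exp_pos (-(c * β y)), Real.add_one_le_exp (c * β y)]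
      calc Real.exp (-s) * (c * βI) = ∫ y, Real.exp (-s) * (c * β y) := by
            rw [integral_const_mul, integral_const_mul, hβ_sum]
        _ ≤ I := integral_mono (hint_cβ.const_mul _) hI_int fun y => hpt y
    -- upper bound on Q = P2 c
    have hQ : P2 c = ∫ y, Real.exp (-(c * β y)) * f y := hP2 c
    have hQ_int : Integrable fun y => Real.exp (-(c * β y)) * f y := by
      refine hf_int.mono
        (((hβ_meas.const_mul c).neg.exp.mul hf_meas).aestronglyMeasurable) ?_
      refine Eventually.of_forall fun y => ?_
      rw [Real.norm_of_nonneg (mul_nonneg (Real.exp_nonneg _) (hf_nonneg y)),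
        Real.norm_of_nonneg (hf_nonneg y)]
      have h1 : Real.exp (-(c * β y)) ≤ 1 :=
        Real.exp_le_one_iff.mpr (by nlinarith [hβ_nonneg y])
      nlinarith [hf_nonneg y, Real.exp_pos (-(c * β y))]
    have hconv : ∀ y, Real.exp (-(c * β y)) ≤
        1 - (β y / βhat) * (1 - Real.exp (-s)) := by
      intro y
      have ha0 : 0 ≤ β y / βhat := div_nonneg (hβ_nonneg y) hβhat_pos.le
      have ha1 : β y / βhat ≤ 1 := (div_le_one hβhat_pos).mpr (hβ_le_hat y)
      have hcx := convexOn_exp.2 (Set.mem_univ (0:ℝ)) (Set.mem_univ (-s))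
        (by linarith : (0:ℝ) ≤ 1 - β y / βhat) ha0 (by ring)
      have harg : (1 - β y / βhat) • (0:ℝ) + (β y / βhat) • (-s) = -(c * β y) := by
        simp only [smul_eq_mul, mul_zero, zero_add, hs]
        field_simp
      rw [harg] at hcx
      simp only [smul_eq_mul, Real.exp_zero, mul_one] at hcx
      nlinarith [hcx]
    have hQle : P2 c ≤ 1 - k / βhat * (1 - Real.exp (-s)) := by
      have hrhs_int : Integrable fun y =>
          f y - (1 - Real.exp (-s)) / βhat * (β y * f y) :=
        hf_int.sub (hβf_int.const_mul _)
      have hmono : ∀ y, Real.exp (-(c * β y)) * f y ≤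
          f y - (1 - Real.exp (-s)) / βhat * (β y * f y) := by
        intro y
        have h1 := mul_le_mul_of_nonneg_right (hconv y) (hf_nonneg y)
        have heq : (1 - β y / βhat * (1 - Real.exp (-s))) * f y =
            f y - (1 - Real.exp (-s)) / βhat * (β y * f y) := by ring
        linarith [heq ▸ h1]
      have hle := integral_mono hQ_int hrhs_int hmono
      rw [integral_sub hf_int (hβf_int.const_mul _), integral_const_mul,
        hf_prob, ← hk] at hle
      rw [hQ]
      refine hle.trans (le_of_eq (by ring))
    -- constraint manipulation
    have hP1eq : P1 c lam = Real.exp (-(lam * I)) := by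
      rw [hP1 c lam, hI]
    have hP1le : P1 c lam ≤ 1 := by
      rw [hP1eq]
      exact Real.exp_le_one_iff.mpr (by nlinarith)
    have hQ0 : 0 ≤ P2 c := by
      rw [hQ]
      exact integral_nonneg fun y => mul_nonneg (Real.exp_nonneg _) (hf_nonneg y)
    have hQge : 1 - ε ≤ P2 c := by nlinarith [hcons]
    have hQpos : 0 < P2 c := lt_of_lt_of_le hε1 hQge
    have hlogs : lam * I ≤ Real.log (P2 c) - Real.log (1 - ε) := by
      have h1 : 1 - ε ≤ Real.exp (-(lam * I)) * P2 c := by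
        rw [← hP1eq]; exact hcons
      have h2 : Real.log (1 - ε) ≤ Real.log (Real.exp (-(lam * I)) * P2 c) :=
        (Real.log_le_log_iff hε1 (mul_pos (Real.exp_pos _) hQpos)).mpr h1
      rw [Real.log_mul (Real.exp_ne_zero _) hQpos.ne', Real.log_exp] at h2
      linarith
    have hlogQ : Real.log (P2 c) ≤ P2 c - 1 := Real.log_le_sub_one_of_pos hQpos
    have hLeq : Real.log (1 / (1 - ε)) = - Real.log (1 - ε) := by
      rw [one_div, Real.log_inv]
    set L : ℝ := Real.log (1 / (1 - ε)) with hL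
    have hLρ : L < k / βhat := by
      have h1 : Real.exp (-(k / βhat)) < 1 - ε := by linarith
      have h2 : Real.log (Real.exp (-(k / βhat))) < Real.log (1 - ε) :=
        Real.log_lt_log (Real.exp_pos _) h1
      rw [Real.log_exp] at h2
      rw [hLeq]; linarith
    have hchain : lam * I ≤ L - k / βhat * (1 - Real.exp (-s)) := by
      have := hQle
      rw [hLeq]
      linarith
    have hes : Real.exp (-s) * Real.exp s = 1 := by
      rw [← Real.exp_add]; simp
    have hes1 : (1:ℝ) ≤ Real.exp s := Real.one_le_exp hs_pos.le
    have hfinal : lam * c * βI ≤ L := by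
      have h1 : lam * (Real.exp (-s) * (c * βI)) ≤ lam * I :=
        mul_le_mul_of_nonneg_left hIlow hlam.le
      have h2 : lam * (Real.exp (-s) * (c * βI)) ≤
          L - k / βhat * (1 - Real.exp (-s)) := le_trans h1 hchain
      have h3 := mul_le_mul_of_nonneg_right h2 (Real.exp_pos s).le
      have hLHS : lam * (Real.exp (-s) * (c * βI)) * Real.exp s =
          lam * c * βI * (Real.exp (-s) * Real.exp s) := by ring
      rw [hLHS, hes, mul_one] at h3
      have hexp : (1 - Real.exp (-s)) * Real.exp s = Real.exp s - 1 := by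
        have h5 : (1 - Real.exp (-s)) * Real.exp s =
            Real.exp s - Real.exp (-s) * Real.exp s := by ring
        rw [h5, hes]
      have hRHS : (L - k / βhat * (1 - Real.exp (-s))) * Real.exp s =
          L * Real.exp s - k / βhat * (Real.exp s - 1) := by
        rw [← hexp]; ring
      rw [hRHS] at h3
      nlinarith [mul_nonneg (by linarith : (0:ℝ) ≤ k / βhat - L)
        (by linarith : (0:ℝ) ≤ Real.exp s - 1)]
    rw [le_div_iff₀ hβI_pos]
    exact hfinal
  -- conclude
  rw [hC]
  have hsup : (⨆ (p : ℝ × ℝ) (_ : 0 < p.1 ∧ 0 < p.2 ∧ 1 - ε ≤ P1 p.2 p.1 * P2 p.2),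
      ENNReal.ofReal (p.1 * p.2)) ≤
      ENNReal.ofReal (Real.log (1 / (1 - ε)) / βI) := by
    refine iSup_le fun p => iSup_le fun hp => ?_
    exact ENNReal.ofReal_le_ofReal (hmain p.1 p.2 hp.1 hp.2.1 hp.2.2)
  calc ENNReal.ofReal (1 - ε) *
      (⨆ (p : ℝ × ℝ) (_ : 0 < p.1 ∧ 0 < p.2 ∧ 1 - ε ≤ P1 p.2 p.1 * P2 p.2),
        ENNReal.ofReal (p.1 * p.2))
      ≤ ENNReal.ofReal (1 - ε) * ENNReal.ofReal (Real.log (1 / (1 - ε)) / βI) :=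
        mul_le_mul_right hsup _
    _ = ENNReal.ofReal ((1 - ε) * (Real.log (1 / (1 - ε)) / βI)) :=
        (ENNReal.ofReal_mul (by linarith)).symm
    _ = ENNReal.ofReal ((1 - ε) / βI * Real.log (1 / (1 - ε))) := by
        congr 1; ring
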